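/- Let K ≥ 3 and let p¹, p² ∈ (0,1)^K be probability vectors with a label y and an index j ≠ y such that p¹_y = max_k p¹_k, p²_y = max_k p²_k, p¹_j = p²_j, p¹_y > p²_y, and p¹_k ≤ p²_k for all k ∉ {j, y}. Let A satisfy A + log p^i_k > 0 for all i, k. Then ∂NNCE/∂p_j evaluated at p¹ is strictly greater than at p²: (1/p¹_j)·(A + log p¹_y)/(Σ_k (A + log p¹_k))² > (1/p²_j)·(A + log p²_y)/(Σ_k (A + log p²_k))². -/

import Mathlib

open Finset

theorem nnce_gradient_sample_compare {K : ℕ} (hK : 3 ≤ K) (p1 p2 : Fin K → ℝ)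
    (hp1 : ∀ k, 0 < p1 k ∧ p1 k < 1) (hp2 : ∀ k, 0 < p2 k ∧ p2 k < 1)
    (hs1 : ∑ k, p1 k = 1) (hs2 : ∑ k, p2 k = 1)
    (y j : Fin K) (hjy : j ≠ y)
    (hmax1 : ∀ k, p1 k ≤ p1 y) (hmax2 : ∀ k, p2 k ≤ p2 y)
    (hj : p1 j = p2 j) (hy : p2 y < p1 y)
    (hk : ∀ k, k ≠ j → k ≠ y → p1 k ≤ p2 k)
    (A : ℝ) (hA1 : ∀ k, 0 < A + Real.log (p1 k)) (hA2 : ∀ k, 0 < A + Real.log (p2 k)) :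
    (1 / p2 j) * (A + Real.log (p2 y)) / (∑ k : Fin K, (A + Real.log (p2 k))) ^ 2
      < (1 / p1 j) * (A + Real.log (p1 y)) / (∑ k : Fin K, (A + Real.log (p1 k))) ^ 2 := by
  have hj0 : 0 < p1 j := (hp1 j).1
  have hy1 : 0 < p1 y := (hp1 y).1
  have hy2 : 0 < p2 y := (hp2 y).1
  set s : Finset (Fin K) := (Finset.univ.erase y).erase j with hs
  have hsplit : ∀ f : Fin K → ℝ, ∑ k, f k = f y + (f j + ∑ k ∈ s, f k) := by
    intro f
    rw [← Finset.add_sum_erase _ f (Finset.mem_univ y)]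
    congr 1
    rw [hs, ← Finset.add_sum_erase _ f (Finset.mem_erase.mpr ⟨hjy, Finset.mem_univ j⟩)]
  have hmem : ∀ k ∈ s, k ≠ j ∧ k ≠ y := by
    intro k hk'
    rw [hs] at hk'
    simp only [Finset.mem_erase, Finset.mem_univ, and_true] at hk'
    exact ⟨hk'.1, hk'.2⟩
  -- total mass moved
  have hD : ∑ k ∈ s, (p2 k - p1 k) = p1 y - p2 y := by
    have h0 : ∑ k, (p2 k - p1 k) = 0 := by
      rw [Finset.sum_sub_distrib, hs1, hs2]; ring
    have h1 := hsplit (fun k => p2 k - p1 k)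
    rw [h0] at h1
    have : p2 j - p1 j = 0 := by rw [hj]; ring
    linarith
  -- per-term log bound on s
  have hterm : ∀ k ∈ s, (p2 k - p1 k) / p2 y ≤ Real.log (p2 k) - Real.log (p1 k) := by
    intro k hks
    obtain ⟨hkj, hky⟩ := hmem k hks
    have hp1k : 0 < p1 k := (hp1 k).1
    have hp2k : 0 < p2 k := (hp2 k).1
    have hle : p1 k ≤ p2 k := hk k hkj hky
    have h1 : Real.log (p1 k / p2 k) ≤ p1 k / p2 k - 1 :=
      Real.log_le_sub_one_of_pos (by positivity)
    rw [Real.log_div (ne_of_gt hp1k) (ne_of_gt hp2k)] at h1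
    have h2 : (p2 k - p1 k) / p2 k ≤ Real.log (p2 k) - Real.log (p1 k) := by
      have : p1 k / p2 k - 1 = -((p2 k - p1 k) / p2 k) := by field_simp; ring
      rw [this] at h1
      linarith
    have h3 : (p2 k - p1 k) / p2 y ≤ (p2 k - p1 k) / p2 k :=
      div_le_div_of_nonneg_left (by linarith) hp2k (hmax2 k)
    linarith
  -- sum of log differences on s dominates D / p2 y
  have hsum_s : (p1 y - p2 y) / p2 y ≤ ∑ k ∈ s, (Real.log (p2 k) - Real.log (p1 k)) := by
    calc (p1 y - p2 y) / p2 y = ∑ k ∈ s, (p2 k - p1 k) / p2 y := by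
          rw [← Finset.sum_div, hD]
      _ ≤ ∑ k ∈ s, (Real.log (p2 k) - Real.log (p1 k)) := Finset.sum_le_sum hterm
  -- strict bound on log p1 y - log p2 y
  have hystrict : Real.log (p1 y) - Real.log (p2 y) < (p1 y - p2 y) / p2 y := by
    have h1 : Real.log (p1 y / p2 y) < p1 y / p2 y - 1 :=
      Real.log_lt_sub_one_of_pos (by positivity)
        (by
          intro h
          have : p1 y = p2 y := by field_simp at h; linarith
          linarith)
    rw [Real.log_div (ne_of_gt hy1) (ne_of_gt hy2)] at h1
    have : p1 y / p2 y - 1 = (p1 y - p2 y) / p2 y := by field_simp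
    linarith
  -- compare log sums
  have hlog : ∑ k, Real.log (p1 k) < ∑ k, Real.log (p2 k) := by
    have h1 := hsplit (fun k => Real.log (p1 k))
    have h2 := hsplit (fun k => Real.log (p2 k))
    have hsub : ∑ k ∈ s, (Real.log (p2 k) - Real.log (p1 k))
        = ∑ k ∈ s, Real.log (p2 k) - ∑ k ∈ s, Real.log (p1 k) :=
      Finset.sum_sub_distrib _ _
    have hjeq : Real.log (p1 j) = Real.log (p2 j) := by rw [hj]
    linarith
  -- compare totals
  set T1 := ∑ k : Fin K, (A + Real.log (p1 k)) with hT1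
  set T2 := ∑ k : Fin K, (A + Real.log (p2 k)) with hT2
  have hTlt : T1 < T2 := by
    rw [hT1, hT2, Finset.sum_add_distrib, Finset.sum_add_distrib]
    linarith
  have hT1pos : 0 < T1 := Finset.sum_pos (fun k _ => hA1 k)
    (Finset.univ_nonempty_iff.mpr ⟨y⟩)
  have hT2pos : 0 < T2 := by linarith
  have ha : A + Real.log (p2 y) < A + Real.log (p1 y) := by
    have := Real.log_lt_log hy2 hy
    linarith
  have ha2 : 0 < A + Real.log (p2 y) := hA2 y
  have key : (A + Real.log (p2 y)) / T2 ^ 2 < (A + Real.log (p1 y)) / T1 ^ 2 := by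
    have hsq : T1 ^ 2 < T2 ^ 2 := by nlinarith
    calc (A + Real.log (p2 y)) / T2 ^ 2 < (A + Real.log (p1 y)) / T2 ^ 2 := by
          gcongr
      _ ≤ (A + Real.log (p1 y)) / T1 ^ 2 := by
          apply div_le_div_of_nonneg_left (by linarith) (by positivity) (le_of_lt hsq)
  rw [hj, mul_div_assoc, mul_div_assoc]
  exact mul_lt_mul_of_pos_left key (by rw [← hj]; positivity)
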